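/- In PSL_2(q) with q odd, q ≥ 5, every involution commutes with at least (q−1)/2 involutions; consequently if some involution of PSL_2(q) commutes with at most n involutions, then q ≤ 2n + 1. -/

import Mathlib

open Matrix

namespace Stmt10Aux

variable {F : Type*} [Field F]

lemma fin2_eq_iff {α : Type*} {a b c d e f g h : α} :
    !![a,b;c,d] = !![e,f;g,h] ↔ a = e ∧ b = f ∧ c = g ∧ d = h := by
  constructor
  · intro H
    refine ⟨?_, ?_, ?_, ?_⟩
    · simpa using congrFun (congrFun H 0) 0
    · simpa using congrFun (congrFun H 0) 1
    · simpa using congrFun (congrFun H 1) 0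
    · simpa using congrFun (congrFun H 1) 1
  · rintro ⟨rfl, rfl, rfl, rfl⟩; rfl

lemma negone_fin_two : (-1 : Matrix (Fin 2) (Fin 2) F) = !![-1,0;0,-1] := by
  ext i j
  fin_cases i <;> fin_cases j <;> simp

lemma neg_fin_two {α : Type*} [Ring α] (a b c d : α) : -(!![a,b;c,d]) = !![-a,-b;-c,-d] := by
  ext i j
  fin_cases i <;> fin_cases j <;> simp

lemma center_pm (h2 : (2:F) ≠ 0) {Z : Matrix.SpecialLinearGroup (Fin 2) F}
    (hZ : Z ∈ Subgroup.center (Matrix.SpecialLinearGroup (Fin 2) F)) :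
    (Z : Matrix (Fin 2) (Fin 2) F) = 1 ∨ (Z : Matrix (Fin 2) (Fin 2) F) = -1 := by
  obtain ⟨r, hr, hs⟩ := Matrix.SpecialLinearGroup.mem_center_iff.mp hZ
  rw [Fintype.card_fin] at hr
  have h : (r - 1) * (r + 1) = 0 := by linear_combination hr
  rcases mul_eq_zero.mp h with h | h
  · left
    have : r = 1 := by linear_combination h
    rw [← hs, this]
    simp
  · right
    have : r = -1 := by linear_combination h
    rw [← hs, this]
    ext i j
    fin_cases i <;> fin_cases j <;> simp [Matrix.scalar_apply, Matrix.diagonal]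

lemma negOne_det : ((-1 : Matrix (Fin 2) (Fin 2) F)).det = 1 := by
  simp [Matrix.det_fin_two]

def negOne : Matrix.SpecialLinearGroup (Fin 2) F := ⟨-1, negOne_det⟩

lemma negOne_mem_center :
    (negOne : Matrix.SpecialLinearGroup (Fin 2) F) ∈
      Subgroup.center (Matrix.SpecialLinearGroup (Fin 2) F) := by
  refine Subgroup.mem_center_iff.mpr fun g => ?_
  refine Subtype.ext ?_
  simp only [negOne, Matrix.SpecialLinearGroup.coe_mul, Matrix.SpecialLinearGroup.coe_mk]
  show (g : Matrix (Fin 2) (Fin 2) F) * (-1) = (-1) * g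
  simp [mul_neg, neg_mul]

lemma trace_eq_zero (T : Matrix.SpecialLinearGroup (Fin 2) F)
    (hT : (T : Matrix (Fin 2) (Fin 2) F) * T = -1) :
    (T : Matrix (Fin 2) (Fin 2) F) 1 1 = -((T : Matrix (Fin 2) (Fin 2) F) 0 0) := by
  set a := (T : Matrix (Fin 2) (Fin 2) F) 0 0 with ha
  set b := (T : Matrix (Fin 2) (Fin 2) F) 0 1 with hb
  set c := (T : Matrix (Fin 2) (Fin 2) F) 1 0 with hc
  set d := (T : Matrix (Fin 2) (Fin 2) F) 1 1 with hd
  have hdet : a * d - b * c = 1 := by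
    have := T.2
    rwa [Matrix.det_fin_two] at this
  have hm : (T : Matrix (Fin 2) (Fin 2) F) = !![a,b;c,d] := Matrix.eta_fin_two _
  rw [hm, Matrix.mul_fin_two, negone_fin_two, fin2_eq_iff] at hT
  obtain ⟨h00, h01, h10, h11⟩ := hT
  have key : a * (a + d) = 0 := by linear_combination h00 + hdet
  rcases mul_eq_zero.mp key with h | h
  · have hbd : b * d = 0 := by linear_combination h01 - b * h
    have hb0 : b ≠ 0 := by
      intro hb0
      rw [hb0] at hdet
      rw [h] at hdet
      simp at hdet
    have hd0 : d = 0 := by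
      rcases mul_eq_zero.mp hbd with h' | h'
      · exact absurd h' hb0
      · exact h'
    rw [hd0, h, neg_zero]
  · linear_combination h

lemma not_sq_one (h2 : (2:F) ≠ 0) (T : Matrix.SpecialLinearGroup (Fin 2) F)
    (hT : (T : Matrix (Fin 2) (Fin 2) F) * T = 1)
    (hne : (QuotientGroup.mk T : _ ⧸ Subgroup.center (Matrix.SpecialLinearGroup (Fin 2) F)) ≠ 1) :
    False := by
  set a := (T : Matrix (Fin 2) (Fin 2) F) 0 0 with ha
  set b := (T : Matrix (Fin 2) (Fin 2) F) 0 1 with hb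
  set c := (T : Matrix (Fin 2) (Fin 2) F) 1 0 with hc
  set d := (T : Matrix (Fin 2) (Fin 2) F) 1 1 with hd
  have hdet : a * d - b * c = 1 := by
    have := T.2
    rwa [Matrix.det_fin_two] at this
  have hm : (T : Matrix (Fin 2) (Fin 2) F) = !![a,b;c,d] := Matrix.eta_fin_two _
  rw [hm, Matrix.mul_fin_two, Matrix.one_fin_two, fin2_eq_iff] at hT
  obtain ⟨h00, h01, h10, h11⟩ := hT
  by_cases had : a + d = 0
  · exact h2 (by linear_combination a * had - h00 - hdet)
  · have hbz : b = 0 := by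
      rcases mul_eq_zero.mp (show b * (a + d) = 0 by linear_combination h01) with h | h
      · exact h
      · exact absurd h had
    have hcz : c = 0 := by
      rcases mul_eq_zero.mp (show c * (a + d) = 0 by linear_combination h10) with h | h
      · exact h
      · exact absurd h had
    have ha2 : a * a = 1 := by linear_combination h00 - c * hbz
    have haz : a ≠ 0 := by
      intro h0
      rw [h0] at ha2
      simp at ha2
    have hda : d = a := by
      have : a * (d - a) = 0 := by linear_combination hdet - ha2 + c * hbz
      rcases mul_eq_zero.mp this with h | h
      · exact absurd h haz
      · linear_combination h
    apply hne
    rw [QuotientGroup.eq_one_iff]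
    refine Matrix.SpecialLinearGroup.mem_center_iff.mpr ⟨a, ?_, ?_⟩
    · rw [Fintype.card_fin]
      linear_combination ha2
    · rw [hm, hbz, hcz, hda]
      ext i j
      fin_cases i <;> fin_cases j <;> simp [Matrix.scalar_apply, Matrix.diagonal]

lemma exists_conj (h2 : (2:F) ≠ 0) (T : Matrix.SpecialLinearGroup (Fin 2) F)
    (hT : (T : Matrix (Fin 2) (Fin 2) F) * T = -1) :
    ∃ P Q : Matrix (Fin 2) (Fin 2) F, P * Q = 1 ∧ Q * P = 1 ∧
      (T : Matrix (Fin 2) (Fin 2) F) * P = P * !![0,-1;1,0] := by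
  have htr := trace_eq_zero T hT
  set a := (T : Matrix (Fin 2) (Fin 2) F) 0 0 with ha
  set b := (T : Matrix (Fin 2) (Fin 2) F) 0 1 with hb
  set c := (T : Matrix (Fin 2) (Fin 2) F) 1 0 with hc
  have hm : (T : Matrix (Fin 2) (Fin 2) F) = !![a,b;c,-a] := by
    rw [← htr]; exact Matrix.eta_fin_two _
  have h00 : a * a + b * c = -1 := by
    have h := hT
    rw [hm, Matrix.mul_fin_two, negone_fin_two, fin2_eq_iff] at h
    exact h.1
  rw [hm]
  have main : ∃ P : Matrix (Fin 2) (Fin 2) F, IsUnit P.det ∧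
      !![a,b;c,-a] * P = P * !![0,-1;1,0] := by
    by_cases hcz : c = 0
    · have ha2 : a * a = -1 := by linear_combination h00 - b * hcz
      have haz : a ≠ 0 := by
        intro h0
        rw [h0] at ha2
        exact one_ne_zero (by linear_combination ha2)
      by_cases hbz : b = 0
      · refine ⟨!![1, a; 1, -a], ?_, ?_⟩
        · rw [Matrix.det_fin_two_of]
          refine Ne.isUnit fun h => ?_
          have h2a : (2:F) * a = 0 := by linear_combination -h
          rcases mul_eq_zero.mp h2a with h' | h'
          · exact h2 h'
          · exact haz h'
        · rw [hbz, hcz, Matrix.mul_fin_two, Matrix.mul_fin_two, fin2_eq_iff]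
          exact ⟨by ring, by linear_combination ha2, by ring, by linear_combination ha2⟩
      · refine ⟨!![0, b; 1, -a], ?_, ?_⟩
        · rw [Matrix.det_fin_two_of]
          refine Ne.isUnit fun h => ?_
          exact hbz (by linear_combination -h)
        · rw [hcz, Matrix.mul_fin_two, Matrix.mul_fin_two, fin2_eq_iff]
          exact ⟨by ring, by ring, by ring, by linear_combination ha2⟩
    · refine ⟨!![1, a; 0, c], ?_, ?_⟩
      · rw [Matrix.det_fin_two_of]
        refine Ne.isUnit fun h => ?_
        exact hcz (by linear_combination h)
      · rw [Matrix.mul_fin_two, Matrix.mul_fin_two, fin2_eq_iff]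
        exact ⟨by ring, by linear_combination h00, by ring, by ring⟩
  obtain ⟨P, hu, hP⟩ := main
  exact ⟨P, P⁻¹, Matrix.mul_nonsing_inv P hu, Matrix.nonsing_inv_mul P hu, hP⟩

/-! the family of anticommuting involutions -/

def Mm (p : F × F) : Matrix (Fin 2) (Fin 2) F := !![p.1, p.2; p.2, -p.1]

lemma Mm_det {p : F × F} (hp : p.1^2 + p.2^2 = -1) : (Mm p).det = 1 := by
  rw [Mm, Matrix.det_fin_two_of]
  linear_combination - hp

lemma Mm_mul_self {p : F × F} (hp : p.1^2 + p.2^2 = -1) : Mm p * Mm p = -1 := by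
  rw [Mm, Matrix.mul_fin_two, negone_fin_two, fin2_eq_iff]
  exact ⟨by linear_combination hp, by ring, by ring, by linear_combination hp⟩

lemma Mm_anti (p : F × F) : Mm p * !![0,-1;1,0] = -(!![0,-1;1,0] * Mm p) := by
  rw [Mm, Matrix.mul_fin_two, Matrix.mul_fin_two, neg_fin_two, fin2_eq_iff]
  exact ⟨by ring, by ring, by ring, by ring⟩

lemma Mm_ne_one (h2 : (2:F) ≠ 0) (p : F × F) : Mm p ≠ 1 := by
  intro h
  rw [Mm, Matrix.one_fin_two, fin2_eq_iff] at h
  obtain ⟨h1, -, -, h4⟩ := h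
  exact h2 (by linear_combination - h1 - h4)

lemma Mm_ne_negone (h2 : (2:F) ≠ 0) (p : F × F) : Mm p ≠ -1 := by
  intro h
  rw [Mm, negone_fin_two, fin2_eq_iff] at h
  obtain ⟨h1, -, -, h4⟩ := h
  exact h2 (by linear_combination h1 + h4)

lemma Mm_inj {p p' : F × F} (h : Mm p' = Mm p) : p' = p := by
  rw [Mm, Mm, fin2_eq_iff] at h
  exact Prod.ext h.1 h.2.1

lemma Mm_inj_neg {p p' : F × F} (h : Mm p' = -(Mm p)) : p' = -p := by
  rw [Mm, Mm, neg_fin_two, fin2_eq_iff] at h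
  exact Prod.ext h.1 h.2.1

variable (P Q : Matrix (Fin 2) (Fin 2) F)

def Nn (p : F × F) : Matrix (Fin 2) (Fin 2) F := P * Mm p * Q

lemma Nn_det (hPQ : P * Q = 1) {p : F × F} (hp : p.1^2 + p.2^2 = -1) :
    (Nn P Q p).det = 1 := by
  have hdetPQ : P.det * Q.det = 1 := by
    have := congrArg Matrix.det hPQ
    rwa [Matrix.det_mul, Matrix.det_one] at this
  rw [Nn]
  simp only [Matrix.det_mul, Mm_det hp]
  linear_combination hdetPQ

lemma Nn_rec (hQP : Q * P = 1) (p : F × F) : Q * Nn P Q p * P = Mm p := by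
  calc Q * Nn P Q p * P = (Q * P) * Mm p * (Q * P) := by
        rw [Nn]; simp only [Matrix.mul_assoc]
  _ = Mm p := by rw [hQP]; simp [Matrix.mul_assoc]

lemma Nn_mul_self (hPQ : P * Q = 1) (hQP : Q * P = 1) {p : F × F}
    (hp : p.1^2 + p.2^2 = -1) : Nn P Q p * Nn P Q p = -1 := by
  calc Nn P Q p * Nn P Q p = P * Mm p * ((Q * P) * (Mm p * Q)) := by
        rw [Nn]; simp only [Matrix.mul_assoc]
  _ = P * (Mm p * Mm p) * Q := by rw [hQP, Matrix.one_mul]; simp only [Matrix.mul_assoc]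
  _ = -(P * Q) := by rw [Mm_mul_self hp]; simp [Matrix.mul_neg, Matrix.neg_mul]
  _ = -1 := by rw [hPQ]

lemma Nn_anti (hQP : Q * P = 1) {Tm : Matrix (Fin 2) (Fin 2) F}
    (hTm : Tm = P * !![0,-1;1,0] * Q) (p : F × F) :
    Nn P Q p * Tm = -(Tm * Nn P Q p) := by
  calc Nn P Q p * Tm = P * Mm p * ((Q * P) * (!![0,-1;1,0] * Q)) := by
        rw [Nn, hTm]; simp only [Matrix.mul_assoc]
  _ = P * (Mm p * !![0,-1;1,0]) * Q := by
        rw [hQP, Matrix.one_mul]; simp only [Matrix.mul_assoc]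
  _ = P * (-(!![0,-1;1,0] * Mm p)) * Q := by rw [Mm_anti]
  _ = -(Tm * Nn P Q p) := by
        rw [hTm, Nn]
        simp only [Matrix.mul_neg, Matrix.neg_mul, Matrix.mul_assoc]
        rw [← Matrix.mul_assoc Q P, hQP, Matrix.one_mul]

def mkSL (A : Matrix (Fin 2) (Fin 2) F) (h : A.det = 1) :
    Matrix.SpecialLinearGroup (Fin 2) F := ⟨A, h⟩

@[simp] lemma mkSL_val (A : Matrix (Fin 2) (Fin 2) F) (h : A.det = 1) :
    (mkSL A h).val = A := rfl

@[simp] lemma mkSL_coe (A : Matrix (Fin 2) (Fin 2) F) (h : A.det = 1) :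
    (mkSL A h : Matrix (Fin 2) (Fin 2) F) = A := rfl

end Stmt10Aux

open Stmt10Aux

theorem stmt_10 (q : ℕ) (F : Type*) [Field F] [Fintype F]
    (hF : Fintype.card F = q) (hodd : Odd q) (hq : 5 ≤ q) (n : ℕ) (hn : 0 < n)
    (t : Matrix.SpecialLinearGroup (Fin 2) F ⧸
      Subgroup.center (Matrix.SpecialLinearGroup (Fin 2) F))
    (ht : orderOf t = 2) :
    (q - 1) / 2 ≤ Nat.card {z : Matrix.SpecialLinearGroup (Fin 2) F ⧸
        Subgroup.center (Matrix.SpecialLinearGroup (Fin 2) F) |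
        orderOf z = 2 ∧ z * t = t * z} ∧
      (Nat.card {z : Matrix.SpecialLinearGroup (Fin 2) F ⧸
        Subgroup.center (Matrix.SpecialLinearGroup (Fin 2) F) |
        orderOf z = 2 ∧ z * t = t * z} ≤ n → q ≤ 2 * n + 1) := by
  classical
  have hchar : ringChar F ≠ 2 := by
    intro hc
    have h0 := FiniteField.even_card_of_char_two hc
    rw [hF] at h0
    obtain ⟨k, hk⟩ := hodd
    omega
  have h2 : (2:F) ≠ 0 := Ring.two_ne_zero hchar
  obtain ⟨T, rfl⟩ := QuotientGroup.mk_surjective t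
  have hne : (QuotientGroup.mk T : Matrix.SpecialLinearGroup (Fin 2) F ⧸
      Subgroup.center (Matrix.SpecialLinearGroup (Fin 2) F)) ≠ 1 := by
    intro h
    rw [h, orderOf_one] at ht
    omega
  have hTc : (T : Matrix (Fin 2) (Fin 2) F) * T = -1 := by
    have hsq : (QuotientGroup.mk T : Matrix.SpecialLinearGroup (Fin 2) F ⧸
        Subgroup.center (Matrix.SpecialLinearGroup (Fin 2) F)) ^ 2 = 1 := by
      have := pow_orderOf_eq_one (QuotientGroup.mk T : Matrix.SpecialLinearGroup (Fin 2) F ⧸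
        Subgroup.center (Matrix.SpecialLinearGroup (Fin 2) F))
      rwa [ht] at this
    have hsq' : (QuotientGroup.mk (T * T) : Matrix.SpecialLinearGroup (Fin 2) F ⧸
        Subgroup.center (Matrix.SpecialLinearGroup (Fin 2) F)) = 1 := by
      rw [QuotientGroup.mk_mul, ← sq]
      exact hsq
    have hmem : T * T ∈ Subgroup.center (Matrix.SpecialLinearGroup (Fin 2) F) :=
      (QuotientGroup.eq_one_iff _).mp hsq'
    have hc := center_pm h2 hmem
    rw [Matrix.SpecialLinearGroup.coe_mul] at hc
    rcases hc with hc | hc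
    · exact (not_sq_one h2 T hc hne).elim
    · exact hc
  obtain ⟨P, Q, hPQ, hQP, hTP⟩ := exists_conj h2 T hTc
  have hTm : (T : Matrix (Fin 2) (Fin 2) F) = P * !![0,-1;1,0] * Q := by
    calc (T : Matrix (Fin 2) (Fin 2) F)
        = (T : Matrix (Fin 2) (Fin 2) F) * (P * Q) := by rw [hPQ, Matrix.mul_one]
      _ = ((T : Matrix (Fin 2) (Fin 2) F) * P) * Q := by rw [Matrix.mul_assoc]
      _ = P * !![0,-1;1,0] * Q := by rw [hTP]
  have hmk1 : (QuotientGroup.mk negOne : Matrix.SpecialLinearGroup (Fin 2) F ⧸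
      Subgroup.center (Matrix.SpecialLinearGroup (Fin 2) F)) = 1 :=
    (QuotientGroup.eq_one_iff _).mpr negOne_mem_center
  -- the map into PSL
  let g : F × F → (Matrix.SpecialLinearGroup (Fin 2) F ⧸
      Subgroup.center (Matrix.SpecialLinearGroup (Fin 2) F)) := fun p =>
    if h : (Nn P Q p).det = 1 then QuotientGroup.mk (mkSL (Nn P Q p) h) else 1
  have hgval : ∀ (p : F × F) (hp : p.1 ^ 2 + p.2 ^ 2 = -1),
      g p = QuotientGroup.mk (mkSL (Nn P Q p) (Nn_det P Q hPQ hp)) := by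
    intro p hp
    simp only [g, dif_pos (Nn_det P Q hPQ hp)]
  have hmem : ∀ p : F × F, p.1 ^ 2 + p.2 ^ 2 = -1 →
      orderOf (g p) = 2 ∧ g p * QuotientGroup.mk T = QuotientGroup.mk T * g p := by
    intro p hp
    have hSS : (mkSL (Nn P Q p) (Nn_det P Q hPQ hp)) *
        (mkSL (Nn P Q p) (Nn_det P Q hPQ hp)) = negOne := by
      refine Subtype.ext ?_
      rw [Matrix.SpecialLinearGroup.coe_mul]
      exact Nn_mul_self P Q hPQ hQP hp
    have hsq : (g p) ^ 2 = 1 := by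
      rw [hgval p hp, sq, ← QuotientGroup.mk_mul, hSS, hmk1]
    have hne1 : g p ≠ 1 := by
      rw [hgval p hp]
      intro h
      rw [QuotientGroup.eq_one_iff] at h
      rcases center_pm h2 h with h | h
      · apply Mm_ne_one h2 p
        rw [← Nn_rec P Q hQP p]
        simp only [mkSL_val] at h
        rw [h, Matrix.mul_one, hQP]
      · apply Mm_ne_negone h2 p
        rw [← Nn_rec P Q hQP p]
        simp only [mkSL_val] at h
        rw [h]
        simp only [Matrix.mul_neg, Matrix.mul_one, Matrix.neg_mul]
        rw [hQP]
    have hST : (mkSL (Nn P Q p) (Nn_det P Q hPQ hp)) * T =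
        negOne * (T * (mkSL (Nn P Q p) (Nn_det P Q hPQ hp))) := by
      refine Subtype.ext ?_
      simp only [Matrix.SpecialLinearGroup.coe_mul, mkSL_val]
      rw [show (negOne : Matrix.SpecialLinearGroup (Fin 2) F).val
          = (-1 : Matrix (Fin 2) (Fin 2) F) from rfl]
      rw [Nn_anti P Q hQP hTm p]
      simp
    refine ⟨orderOf_eq_prime hsq hne1, ?_⟩
    rw [hgval p hp, ← QuotientGroup.mk_mul, ← QuotientGroup.mk_mul, hST,
      QuotientGroup.mk_mul, hmk1, one_mul]
  have hfib : ∀ p p' : F × F, p.1 ^ 2 + p.2 ^ 2 = -1 → p'.1 ^ 2 + p'.2 ^ 2 = -1 →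
      g p = g p' → p' = p ∨ p' = -p := by
    intro p p' hp hp' hgp
    rw [hgval p hp, hgval p' hp', QuotientGroup.eq] at hgp
    set Sp := (mkSL (Nn P Q p) (Nn_det P Q hPQ hp)) with hSp
    set Sp' := (mkSL (Nn P Q p') (Nn_det P Q hPQ hp')) with hSp'
    rcases center_pm h2 hgp with h | h
    · left
      have h1 : Sp⁻¹ * Sp' = 1 :=
        Subtype.ext (h.trans (Matrix.SpecialLinearGroup.coe_one (n := Fin 2) (R := F)).symm)
      have h2' : Sp = Sp' := inv_mul_eq_one.mp h1
      have hNe : Nn P Q p = Nn P Q p' := by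
        have := congrArg Subtype.val h2'
        simpa [hSp, hSp'] using this
      apply Mm_inj
      rw [← Nn_rec P Q hQP p, ← Nn_rec P Q hQP p', hNe]
    · right
      have h1 : Sp⁻¹ * Sp' = negOne := Subtype.ext h
      have h2' : Sp' = Sp * negOne := by rw [← h1, mul_inv_cancel_left]
      have hNe : Nn P Q p' = -(Nn P Q p) := by
        have h' := congrArg Subtype.val h2'
        rw [hSp, hSp', Matrix.SpecialLinearGroup.coe_mul] at h'
        simp only [mkSL_val] at h'
        rw [h', show (negOne : Matrix.SpecialLinearGroup (Fin 2) F).val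
            = (-1 : Matrix (Fin 2) (Fin 2) F) from rfl]
        simp [Matrix.mul_neg]
      apply Mm_inj_neg
      rw [← Nn_rec P Q hQP p, ← Nn_rec P Q hQP p', hNe]
      simp [Matrix.mul_neg, Matrix.neg_mul]
  -- base point on the conic x^2 + y^2 = -1
  haveI := ringChar.charP F
  have hp' : (ringChar F).Prime := CharP.char_is_prime F (ringChar F)
  haveI : NeZero (ringChar F) := ⟨hp'.ne_zero⟩
  obtain ⟨an, bn, hab0⟩ := CharP.sq_add_sq F (ringChar F) (-1)
  set a0 : F := (an : F) with ha0
  set b0 : F := (bn : F) with hb0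
  have hab : a0 ^ 2 + b0 ^ 2 = -1 := by
    push_cast at hab0
    exact hab0
  -- finsets
  set U : Finset F := Finset.univ.filter (fun u => ¬(1 + u ^ 2 = 0)) with hU
  set D : Finset (F × F) := Finset.univ.filter (fun p => p.1 ^ 2 + p.2 ^ 2 = -1) with hD
  have hDmem : ∀ p : F × F, p ∈ D ↔ p.1 ^ 2 + p.2 ^ 2 = -1 := by
    intro p
    simp [hD]
  have hUmem : ∀ u : F, u ∈ U ↔ ¬(1 + u ^ 2 = 0) := by
    intro u
    simp [hU]
  have hUcard : q - 2 ≤ U.card := by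
    have hsplit := Finset.card_filter_add_card_filter_not
      (s := (Finset.univ : Finset F)) (p := fun u : F => 1 + u ^ 2 = 0)
    have hqcard : (Finset.univ : Finset F).card = q := by rw [Finset.card_univ, hF]
    rw [hqcard, ← hU] at hsplit
    have hR : ((Finset.univ : Finset F).filter (fun u : F => 1 + u ^ 2 = 0)).card ≤ 2 := by
      rcases Finset.eq_empty_or_nonempty
        ((Finset.univ : Finset F).filter (fun u : F => 1 + u ^ 2 = 0)) with he | ⟨x, hx⟩
      · rw [he]; simp
      · have hxx : 1 + x ^ 2 = 0 := (Finset.mem_filter.mp hx).2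
        have hsub : ((Finset.univ : Finset F).filter (fun u : F => 1 + u ^ 2 = 0)) ⊆
            ({x, -x} : Finset F) := by
          intro y hy
          have hyy : 1 + y ^ 2 = 0 := (Finset.mem_filter.mp hy).2
          have : (y - x) * (y + x) = 0 := by linear_combination hyy - hxx
          rcases mul_eq_zero.mp this with h | h
          · exact Finset.mem_insert.mpr (Or.inl (by linear_combination h))
          · refine Finset.mem_insert.mpr (Or.inr (Finset.mem_singleton.mpr
              (by linear_combination h)))
        calc ((Finset.univ : Finset F).filter (fun u : F => 1 + u ^ 2 = 0)).card
            ≤ ({x, -x} : Finset F).card := Finset.card_le_card hsub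
          _ ≤ 2 := by
              refine (Finset.card_insert_le _ _).trans ?_
              simp
    omega
  -- the parametrization of the conic
  set φ : F → F × F := fun u => (a0 * ((1 - u ^ 2) / (1 + u ^ 2)) - b0 * (2 * u / (1 + u ^ 2)),
      a0 * (2 * u / (1 + u ^ 2)) + b0 * ((1 - u ^ 2) / (1 + u ^ 2))) with hφ
  have hmaps : ∀ u ∈ U, φ u ∈ D := by
    intro u hu
    have hden : ¬(1 + u ^ 2 = 0) := (hUmem u).mp hu
    rw [hDmem]
    rw [hφ]
    field_simp
    ring_nf
    linear_combination ((1 + u ^ 2) ^ 2) * hab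
  have hinj : Set.InjOn φ ↑U := by
    intro u hu v hv h
    rw [Finset.mem_coe, hUmem] at hu hv
    have h1 := congrArg Prod.fst h
    have hc2 := congrArg Prod.snd h
    rw [hφ] at h1 hc2
    simp only at h1 hc2
    have e1 : (a0 * (1 - u ^ 2) - b0 * (2 * u)) * (1 + v ^ 2)
        = (a0 * (1 - v ^ 2) - b0 * (2 * v)) * (1 + u ^ 2) := by
      field_simp at h1
      linear_combination h1
    have e2 : (a0 * (2 * u) + b0 * (1 - u ^ 2)) * (1 + v ^ 2)
        = (a0 * (2 * v) + b0 * (1 - v ^ 2)) * (1 + u ^ 2) := by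
      field_simp at hc2
      linear_combination hc2
    have Hx : (1 - u ^ 2) * (1 + v ^ 2) = (1 - v ^ 2) * (1 + u ^ 2) := by
      linear_combination (-a0) * e1 - b0 * e2
        + ((1 - u ^ 2) * (1 + v ^ 2) - (1 - v ^ 2) * (1 + u ^ 2)) * hab
    have Hy : (2 * u) * (1 + v ^ 2) = (2 * v) * (1 + u ^ 2) := by
      linear_combination b0 * e1 - a0 * e2
        + ((2 * u) * (1 + v ^ 2) - (2 * v) * (1 + u ^ 2)) * hab
    have h5 : (2 : F) * ((v - u) * (v + u)) = 0 := by linear_combination Hx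
    rcases mul_eq_zero.mp h5 with h' | h'
    · exact absurd h' h2
    rcases mul_eq_zero.mp h' with h' | h'
    · linear_combination - h'
    · have hveq : v = -u := by linear_combination h'
      rw [hveq] at Hy
      have hu4 : (2 : F) * ((2 : F) * (u * (1 + u ^ 2))) = 0 := by linear_combination Hy
      rcases mul_eq_zero.mp hu4 with h'' | h''
      · exact absurd h'' h2
      rcases mul_eq_zero.mp h'' with h'' | h''
      · exact absurd h'' h2
      rcases mul_eq_zero.mp h'' with h'' | h''
      · rw [hveq, h'']
        simp
      · exact absurd h'' hu
  have hDcard : q - 2 ≤ D.card :=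
    hUcard.trans (Finset.card_le_card_of_injOn φ hmaps hinj)
  -- fibers of g on D have size at most 2
  set E : Finset (Matrix.SpecialLinearGroup (Fin 2) F ⧸
      Subgroup.center (Matrix.SpecialLinearGroup (Fin 2) F)) := D.image g with hE
  have hDle : D.card ≤ 2 * E.card := by
    refine Finset.card_le_mul_card_image D 2 ?_
    intro b hb
    obtain ⟨p0, hp0D, hgp0⟩ := Finset.mem_image.mp hb
    have hsub : D.filter (fun x => g x = b) ⊆ ({p0, -p0} : Finset (F × F)) := by
      intro y hy
      have hyD := (Finset.mem_filter.mp hy).1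
      have hgy := (Finset.mem_filter.mp hy).2
      have := hfib p0 y ((hDmem p0).mp hp0D) ((hDmem y).mp hyD)
        (by rw [hgp0, hgy])
      rcases this with h | h
      · exact Finset.mem_insert.mpr (Or.inl h)
      · exact Finset.mem_insert.mpr (Or.inr (Finset.mem_singleton.mpr h))
    calc (D.filter (fun x => g x = b)).card
        ≤ ({p0, -p0} : Finset (F × F)).card := Finset.card_le_card hsub
      _ ≤ 2 := by
          refine (Finset.card_insert_le _ _).trans ?_
          simp
  -- the image is contained in the centralizing involutions
  haveI : Finite (Matrix.SpecialLinearGroup (Fin 2) F) := Subtype.finite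
  haveI : Finite (Matrix.SpecialLinearGroup (Fin 2) F ⧸
      Subgroup.center (Matrix.SpecialLinearGroup (Fin 2) F)) := Quotient.finite _
  have hEcard : E.card ≤ Nat.card {z : Matrix.SpecialLinearGroup (Fin 2) F ⧸
      Subgroup.center (Matrix.SpecialLinearGroup (Fin 2) F) |
      orderOf z = 2 ∧ z * (QuotientGroup.mk T) = (QuotientGroup.mk T) * z} := by
    rw [Nat.card_coe_set_eq, ← Set.ncard_coe_finset E]
    refine Set.ncard_le_ncard ?_ (Set.toFinite _)
    intro z hz
    rw [Finset.mem_coe, hE, Finset.mem_image] at hz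
    obtain ⟨p, hpD, rfl⟩ := hz
    exact hmem p ((hDmem p).mp hpD)
  obtain ⟨k, hk⟩ := hodd
  have hchain : q - 2 ≤ 2 * Nat.card {z : Matrix.SpecialLinearGroup (Fin 2) F ⧸
      Subgroup.center (Matrix.SpecialLinearGroup (Fin 2) F) |
      orderOf z = 2 ∧ z * (QuotientGroup.mk T) = (QuotientGroup.mk T) * z} := by
    calc q - 2 ≤ D.card := hDcard
      _ ≤ 2 * E.card := hDle
      _ ≤ 2 * _ := by
          exact Nat.mul_le_mul_left 2 hEcard
  constructor
  · omega
  · intro hle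
    omega
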